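/- Let (X_n)_{n≥0} be a polarization-type process with limit X_∞. Then for any fixed ρ ∈ (0,1), lim_{n→∞} P(X_n ≤ ρ^n) = P(X_∞ = 0). -/

import Mathlib

open Filter

lemma polar_pathwise (q ρ : ℝ) (hq : 1 ≤ q) (hρ0 : 0 < ρ) (hρ1 : ρ < 1)
    (x : ℕ → ℝ) (b : ℕ → ℕ)
    (hx01 : ∀ n, x n ∈ Set.Icc (0:ℝ) 1)
    (hdyn : ∀ n, (x n ≠ 0 ∧ x n ≠ 1 →
        (b (n+1) = 1 → x n ≤ x (n+1) ∧ x (n+1) ≤ q * x n) ∧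
        (b (n+1) = 0 → x (n+1) = x n ^ 2)) ∧
      ((x n = 0 ∨ x n = 1) → x (n+1) = x n))
    (hb : ∀ n : ℕ, b (n+1) = 0 ∨ b (n+1) = 1)
    (hx0 : Tendsto x atTop (nhds 0))
    (hS : Tendsto (fun n : ℕ => (n:ℝ)⁻¹ *
        ∑ i ∈ Finset.range n, (if b (i+1) = 0 then (1:ℝ) else 0)) atTop (nhds (1/2))) :
    ∀ᶠ n in atTop, x n ≤ ρ ^ n := by
  set S : ℕ → ℝ := fun n => ∑ i ∈ Finset.range n, (if b (i+1) = 0 then (1:ℝ) else 0) with hSdef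
  by_cases h0 : ∃ m, x m = 0
  · -- absorbed at 0
    obtain ⟨m, hm⟩ := h0
    have habs : ∀ k, x (m + k) = 0 := by
      intro k
      induction k with
      | zero => simpa using hm
      | succ k ih => rw [← Nat.add_assoc]; rw [(hdyn (m+k)).2 (Or.inl ih)]; exact ih
    filter_upwards [eventually_ge_atTop m] with n hn
    obtain ⟨k, rfl⟩ := Nat.le.dest hn
    rw [habs k]
    positivity
  -- x never hits 0
  push_neg at h0
  have hxpos : ∀ n, 0 < x n := fun n => lt_of_le_of_ne (hx01 n).1 (Ne.symm (h0 n))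
  have hxne1 : ∀ n, x n ≠ 1 := by
    intro m hm1
    have habs : ∀ k, x (m + k) = 1 := by
      intro k
      induction k with
      | zero => simpa using hm1
      | succ k ih => rw [← Nat.add_assoc]; rw [(hdyn (m+k)).2 (Or.inr ih)]; exact ih
    have h1 : Tendsto (fun k => x (m + k)) atTop (nhds 0) := by
      have := hx0.comp (tendsto_add_atTop_nat m)
      simpa [Function.comp_def, Nat.add_comm] using this
    have h2 : Tendsto (fun k => x (m + k)) atTop (nhds 1) := by
      simp only [habs]; exact tendsto_const_nhds
    exact one_ne_zero (tendsto_nhds_unique h2 h1)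
  have hlq : 0 ≤ Real.log q := Real.log_nonneg hq
  have hlρ : Real.log ρ < 0 := Real.log_neg hρ0 hρ1
  obtain ⟨K, hKdef⟩ : ∃ K : ℝ, K = Real.log q - 2 * Real.log ρ + 1 := ⟨_, rfl⟩
  obtain ⟨c, hcdef⟩ : ∃ c : ℝ, c = K + Real.log q := ⟨_, rfl⟩
  have hc : 0 < c := by rw [hcdef, hKdef]; linarith
  obtain ⟨η, hηdef⟩ : ∃ η : ℝ, η = 1 / (4 * c) := ⟨_, rfl⟩
  have hη : 0 < η := by rw [hηdef]; positivity
  have hcη : c * η = 1/4 := by rw [hηdef]; field_simp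
  -- find m with x n small for n ≥ m
  have hev : ∀ᶠ n in atTop, x n < Real.exp (-K) :=
    hx0.eventually_lt_const (Real.exp_pos (-K))
  obtain ⟨m, hm⟩ := hev.exists_forall_of_atTop
  -- key induction
  have key : ∀ n, m ≤ n → Real.log (x n) ≤
      Real.log (x m) + Real.log q * ((n:ℝ) - m) - c * (S n - S m) := by
    intro n hn
    induction n, hn using Nat.le_induction with
    | base => simp
    | succ n hn ih =>
      have hlogsmall : Real.log (x n) ≤ -K := by
        have := Real.log_le_log (hxpos n) (hm n hn).le
        rwa [Real.log_exp] at this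
      have hdy := (hdyn n).1 ⟨(h0 n), hxne1 n⟩
      have hSsucc : S (n+1) = S n + (if b (n+1) = 0 then (1:ℝ) else 0) :=
        Finset.sum_range_succ (fun i => if b (i+1) = 0 then (1:ℝ) else 0) n
      rcases hb n with hbn | hbn
      · -- squaring step
        have hx2 : x (n+1) = x n ^ 2 := hdy.2 hbn
        have : Real.log (x (n+1)) = 2 * Real.log (x n) := by
          rw [hx2, Real.log_pow]; push_cast; ring
        rw [hSsucc, if_pos hbn]
        push_cast
        rw [this]
        linarith
      · have hxq : x (n+1) ≤ q * x n := (hdy.1 hbn).2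
        have hlog : Real.log (x (n+1)) ≤ Real.log q + Real.log (x n) := by
          calc Real.log (x (n+1)) ≤ Real.log (q * x n) :=
                Real.log_le_log (hxpos (n+1)) hxq
            _ = Real.log q + Real.log (x n) :=
                Real.log_mul (by linarith) (hxpos n).ne'
        have hbn' : b (n+1) ≠ 0 := by omega
        rw [hSsucc, if_neg hbn']
        push_cast
        linarith
  -- eventual lower bound on S n
  have hSev : ∀ᶠ n : ℕ in atTop, (1/2 - η) * n ≤ S n := by
    have h1 : ∀ᶠ n : ℕ in atTop, 1/2 - η < (n:ℝ)⁻¹ * S n :=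
      hS.eventually_const_lt (by linarith)
    filter_upwards [h1, eventually_ge_atTop 1] with n hn hn1
    have hnpos : (0:ℝ) < n := by exact_mod_cast hn1
    have := mul_le_mul_of_nonneg_left hn.le hnpos.le
    rw [← mul_assoc, mul_inv_cancel₀ hnpos.ne', one_mul] at this
    calc (1/2 - η) * n = n * (1/2 - η) := by ring
      _ ≤ S n := this
  obtain ⟨A, hAdef⟩ : ∃ A : ℝ, A = Real.log (x m) + c * S m - Real.log q * m := ⟨_, rfl⟩
  have hAev : ∀ᶠ n : ℕ in atTop, 4 * A ≤ (n:ℝ) :=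
    tendsto_natCast_atTop_atTop.eventually_ge_atTop (4*A)
  filter_upwards [hSev, hAev, eventually_ge_atTop m] with n hSn hAn hnm
  have hkey := key n hnm
  have hcS : c * ((1/2 - η) * n) ≤ c * S n := mul_le_mul_of_nonneg_left hSn hc.le
  have hexp : c * ((1/2 - η) * (n:ℝ)) = (Real.log q - Real.log ρ + 1/4) * n := by
    have h2 : c * (1/2) = Real.log q - Real.log ρ + 1/2 := by
      rw [hcdef, hKdef]; ring
    calc c * ((1/2 - η) * (n:ℝ)) = (c * (1/2) - c * η) * n := by ring
      _ = (Real.log q - Real.log ρ + 1/4) * n := by rw [h2, hcη]; ring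
  have hfinal : Real.log (x n) ≤ (n:ℝ) * Real.log ρ := by
    rw [hexp] at hcS
    have h3 : Real.log (x n) ≤ A + Real.log q * n - c * S n := by
      rw [hAdef]; linarith
    have h4 : A ≤ (n:ℝ)/4 := by linarith
    nlinarith [hcS, h3, h4]
  have : Real.log (x n) ≤ Real.log (ρ ^ n) := by rwa [Real.log_pow]; 
  exact (Real.log_le_log_iff (hxpos n) (pow_pos hρ0 n)).mp this

open MeasureTheory ProbabilityTheory Filter
open scoped ENNReal

theorem polarization_concentration
    {Ω : Type*} [MeasurableSpace Ω] (P : Measure Ω) [IsProbabilityMeasure P]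
    (B : ℕ → Ω → ℕ) (hBmeas : ∀ n, Measurable (B n))
    (hBiid : iIndepFun B P)
    (hB1 : ∀ n, 1 ≤ n → P {ω | B n ω = 1} = 1/2)
    (hB0 : ∀ n, 1 ≤ n → P {ω | B n ω = 0} = 1/2)
    (q : ℝ) (hq : 1 ≤ q)
    (X : ℕ → Ω → ℝ) (hXmeasAmb : ∀ n, Measurable (X n))
    (hX01 : ∀ n ω, X n ω ∈ Set.Icc (0:ℝ) 1)
    (G : ℕ → MeasurableSpace Ω)
    (hG : ∀ n, G n = (MeasurableSpace.comap (X 0) inferInstance) ⊔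
        ⨆ i ∈ Finset.Icc 1 n, MeasurableSpace.comap (B i) inferInstance)
    (hXmeas : ∀ n, Measurable[G n] (X n))
    (hindep : ∀ n, Indep (MeasurableSpace.comap (B (n+1)) inferInstance) (G n) P)
    (Xinf : Ω → ℝ) (hXinfmeas : Measurable Xinf)
    (hconv : ∀ᵐ ω ∂P, Tendsto (fun n => X n ω) atTop (nhds (Xinf ω)))
    (hdyn : ∀ n ω, (X n ω ≠ 0 ∧ X n ω ≠ 1 →
        (B (n+1) ω = 1 → X n ω ≤ X (n+1) ω ∧ X (n+1) ω ≤ q * X n ω) ∧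
        (B (n+1) ω = 0 → X (n+1) ω = X n ω ^ 2)) ∧
      ((X n ω = 0 ∨ X n ω = 1) → X (n+1) ω = X n ω))
    (ρ : ℝ) (hρ : ρ ∈ Set.Ioo (0:ℝ) 1) :
    Tendsto (fun n => P {ω | X n ω ≤ ρ ^ n}) atTop (nhds (P {ω | Xinf ω = 0})) := by
  classical
  have hAsm : ∀ n, MeasurableSet {ω | X n ω ≤ ρ ^ n} := fun n =>
    measurableSet_le (hXmeasAmb n) measurable_const
  have hAm : MeasurableSet {ω | Xinf ω = 0} := hXinfmeas (measurableSet_singleton 0)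
  have hBset : ∀ j, MeasurableSet {ω | B j ω = 0} := fun j => hBmeas j (measurableSet_singleton 0)
  have hBset1 : ∀ j, MeasurableSet {ω | B j ω = 1} := fun j => hBmeas j (measurableSet_singleton 1)
  -- a.s. the coin takes values 0 or 1
  have hBval : ∀ᵐ ω ∂P, ∀ n : ℕ, B (n+1) ω = 0 ∨ B (n+1) ω = 1 := by
    rw [ae_all_iff]
    intro n
    have hd : Disjoint {ω | B (n+1) ω = 0} {ω | B (n+1) ω = 1} := by
      rw [Set.disjoint_left]; intro ω hh0 hh1; simp only [Set.mem_setOf_eq] at hh0 hh1; omega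
    have hu : P ({ω | B (n+1) ω = 0} ∪ {ω | B (n+1) ω = 1}) = 1 := by
      rw [measure_union hd (hBset1 _), hB0 _ (by omega), hB1 _ (by omega)]
      exact ENNReal.add_halves 1
    rw [ae_iff]
    have hseteq : {ω | ¬(B (n+1) ω = 0 ∨ B (n+1) ω = 1)} =
        ({ω | B (n+1) ω = 0} ∪ {ω | B (n+1) ω = 1})ᶜ := by
      ext ω; simp [not_or]
    rw [hseteq, prob_compl_eq_one_sub ((hBset _).union (hBset1 _)), hu, tsub_self]
  -- the indicator variables of zero-steps
  set Y : ℕ → Ω → ℝ := fun i ω => if B (i+1) ω = 0 then 1 else 0 with hYdef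
  have hYm : ∀ i, Measurable (Y i) := fun i =>
    Measurable.ite (hBset (i+1)) measurable_const measurable_const
  have hYind : ∀ i, Y i = Set.indicator {ω | B (i+1) ω = 0} (fun _ => (1:ℝ)) := by
    intro i; ext ω
    by_cases h : B (i+1) ω = 0 <;> simp [hYdef, Set.indicator_apply, h]
  have hYint : Integrable (Y 0) P := by
    rw [hYind 0]; exact (integrable_const (1:ℝ)).indicator (hBset 1)
  have hfm : Measurable (fun k : ℕ => if k = 0 then (1:ℝ) else 0) := measurable_from_top
  have hYpair : Pairwise (Function.onFun (IndepFun · · P) Y) := by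
    intro i j hij
    exact (hBiid.indepFun (show i+1 ≠ j+1 by omega)).comp hfm hfm
  have hhalf : (1:ℝ≥0∞) - 1/2 = 1/2 := by
    rw [one_div, ENNReal.one_sub_inv_two]
  have hpre : ∀ (j : ℕ) (s : Set ℝ), P ((Y j) ⁻¹' s) =
      (if (1:ℝ) ∈ s then 1/2 else 0) + (if (0:ℝ) ∈ s then 1/2 else 0) := by
    intro j s
    by_cases h1 : (1:ℝ) ∈ s <;> by_cases h0 : (0:ℝ) ∈ s
    · have he : Y j ⁻¹' s = Set.univ := by
        ext ω
        by_cases hb : B (j+1) ω = 0 <;> simp [hYdef, hb, h1, h0]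
      rw [he, if_pos h1, if_pos h0, measure_univ]
      exact (ENNReal.add_halves 1).symm
    · have he : Y j ⁻¹' s = {ω | B (j+1) ω = 0} := by
        ext ω
        by_cases hb : B (j+1) ω = 0 <;> simp [hYdef, hb, h1, h0]
      rw [he, hB0 _ (by omega), if_pos h1, if_neg h0, add_zero]
    · have he : Y j ⁻¹' s = {ω | B (j+1) ω = 0}ᶜ := by
        ext ω
        by_cases hb : B (j+1) ω = 0 <;> simp [hYdef, hb, h1, h0]
      rw [he, prob_compl_eq_one_sub (hBset _), hB0 _ (by omega), if_neg h1, if_pos h0,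
        zero_add, hhalf]
    · have he : Y j ⁻¹' s = ∅ := by
        ext ω
        by_cases hb : B (j+1) ω = 0 <;> simp [hYdef, hb, h1, h0]
      rw [he, if_neg h1, if_neg h0, add_zero, measure_empty]
  have hident : ∀ i, IdentDistrib (Y i) (Y 0) P P := by
    intro i
    refine ⟨(hYm i).aemeasurable, (hYm 0).aemeasurable, ?_⟩
    refine Measure.ext fun s hs => ?_
    rw [Measure.map_apply (hYm i) hs, Measure.map_apply (hYm 0) hs, hpre, hpre]
  have hmean : ∫ ω, Y 0 ω ∂P = 1/2 := by
    rw [hYind 0, integral_indicator_const (1:ℝ) (hBset 1), measureReal_def, hB0 1 le_rfl]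
    simp [ENNReal.toReal_div]
  have hslln := ProbabilityTheory.strong_law_ae (μ := P) Y hYint hYpair hident
  rw [hmean] at hslln
  -- pointwise a.e. convergence of indicators
  refine tendsto_measure_of_ae_tendsto_indicator_of_isFiniteMeasure atTop hAm hAsm ?_
  filter_upwards [hconv, hBval, hslln] with ω hω hbω hsω
  by_cases hX0 : Xinf ω = 0
  · have hx0' : Tendsto (fun n => X n ω) atTop (nhds 0) := hX0 ▸ hω
    have hsω' : Tendsto (fun n : ℕ => (n:ℝ)⁻¹ *
        ∑ i ∈ Finset.range n, (if B (i+1) ω = 0 then (1:ℝ) else 0)) atTop (nhds (1/2)) := by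
      simpa [smul_eq_mul, hYdef] using hsω
    have hev := polar_pathwise q ρ hq hρ.1 hρ.2 (fun n => X n ω) (fun n => B n ω)
      (fun n => hX01 n ω) (fun n => hdyn n ω) hbω hx0' hsω'
    filter_upwards [hev] with n hn
    exact iff_of_true hn hX0
  · have hge : 0 ≤ Xinf ω := ge_of_tendsto hω (Eventually.of_forall fun n => (hX01 n ω).1)
    have hpos : 0 < Xinf ω := lt_of_le_of_ne hge (Ne.symm hX0)
    have h1 : ∀ᶠ n in atTop, Xinf ω / 2 < X n ω := hω.eventually_const_lt (by linarith)
    have h2 : ∀ᶠ n : ℕ in atTop, ρ ^ n < Xinf ω / 2 :=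
      (tendsto_pow_atTop_nhds_zero_of_lt_one hρ.1.le hρ.2).eventually_lt_const (by linarith)
    filter_upwards [h1, h2] with n hn1 hn2
    exact iff_of_false (by linarith) hX0
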